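/- arXiv:1111.6959 — 2 statements merged into one kernel-verified Lean document; each statement's English description precedes it below -/
import Mathlib

section
/- Adjointness of translation operators at the level of bilinear forms: for the operators E_{a,a+1} and E_{a+1,a} on Λ^m(V*) ⊗ Λ^n(V), and the bilinear pairing making the basis {x_λ} orthonormal, one has ⟨E_{a,a+1} x, y⟩ = ⟨x, E_{a+1,a} y⟩ for all x, y; i.e. E_{a,a+1} and E_{a+1,a} are adjoint with respect to this pairing. -/
open Classical

/-- Index set for the standard monomial basis of `Λ^m(V*) ⊗ Λ^n(V)`
(`t : ℕ` encodes the half-integer index `t + 1/2`). -/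
abbrev XIdx (m n : ℕ) := {c : Fin m → ℕ // StrictAnti c} × {d : Fin n → ℕ // StrictAnti d}

/-- The `gl_{∞/2}`-module `Λ^m(V*) ⊗ Λ^n(V)` in its standard monomial basis. -/
abbrev Xsp (m n : ℕ) := XIdx m n →₀ ℚ

/-- Replace one factor `v_{u+1/2}` by `v_{v+1/2}` in the `Λ^n(V)` part. -/
noncomputable def replD {m n : ℕ} (u v : ℕ) : Xsp m n →ₗ[ℚ] Xsp m n :=
  Finsupp.lift (Xsp m n) ℚ (XIdx m n) fun p =>
    ∑ j : Fin n, if p.2.1 j = u then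
      (if h : StrictAnti (Function.update p.2.1 j v)
        then Finsupp.single (p.1, ⟨Function.update p.2.1 j v, h⟩) (1 : ℚ) else 0)
      else 0

/-- Replace one factor `w_{u+1/2}` by `w_{v+1/2}` in the `Λ^m(V*)` part. -/
noncomputable def replC {m n : ℕ} (u v : ℕ) : Xsp m n →ₗ[ℚ] Xsp m n :=
  Finsupp.lift (Xsp m n) ℚ (XIdx m n) fun p =>
    ∑ i : Fin m, if p.1.1 i = u then
      (if h : StrictAnti (Function.update p.1.1 i v)
        then Finsupp.single (⟨Function.update p.1.1 i v, h⟩, p.2) (1 : ℚ) else 0)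
      else 0

/-- The operator `E_{a,a+1}` on `Λ^m(V*) ⊗ Λ^n(V)`, `a = t + 1/2`. -/
noncomputable def Eraise {m n : ℕ} (t : ℕ) : Xsp m n →ₗ[ℚ] Xsp m n :=
  replD (t + 1) t + replC t (t + 1)

/-- The operator `E_{a+1,a}` on `Λ^m(V*) ⊗ Λ^n(V)`, `a = t + 1/2`. -/
noncomputable def Elower {m n : ℕ} (t : ℕ) : Xsp m n →ₗ[ℚ] Xsp m n :=
  replD t (t + 1) + replC (t + 1) t

/-- The bilinear pairing on `Λ^m(V*) ⊗ Λ^n(V)` making the standard monomial basis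
`{x_λ}` orthonormal. -/
noncomputable def xPair {m n : ℕ} (x y : Xsp m n) : ℚ :=
  Finsupp.sum x fun p c => c * y p

lemma flipcase {k u v : ℕ} {c d : {f : Fin k → ℕ // StrictAnti f}} {j : Fin k}
    (h1 : c.1 j = u) (h2 : StrictAnti (Function.update c.1 j v))
    (h3 : (⟨Function.update c.1 j v, h2⟩ : {f : Fin k → ℕ // StrictAnti f}) = d) :
    d.1 j = v ∧ ∃ h' : StrictAnti (Function.update d.1 j u),
      (⟨Function.update d.1 j u, h'⟩ : {f : Fin k → ℕ // StrictAnti f}) = c := by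
  subst h3
  have key : Function.update (Function.update c.1 j v) j u = c.1 := by
    funext i
    rcases eq_or_ne i j with rfl | hij
    · simp [h1]
    · simp [Function.update_of_ne hij]
  refine ⟨by simp, ?_⟩
  have h' : StrictAnti (Function.update (Function.update c.1 j v) j u) := by
    rw [key]; exact c.2
  exact ⟨h', Subtype.ext key⟩

lemma keylem {k u v : ℕ} (c d : {f : Fin k → ℕ // StrictAnti f}) (j : Fin k) :
    (if c.1 j = u then
      (if h : StrictAnti (Function.update c.1 j v) then
        (if (⟨Function.update c.1 j v, h⟩ : {f : Fin k → ℕ // StrictAnti f}) = d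
          then (1:ℚ) else 0) else 0) else 0)
    = (if d.1 j = v then
      (if h : StrictAnti (Function.update d.1 j u) then
        (if (⟨Function.update d.1 j u, h⟩ : {f : Fin k → ℕ // StrictAnti f}) = c
          then (1:ℚ) else 0) else 0) else 0) := by
  by_cases hc : c.1 j = u
  · by_cases hsa : StrictAnti (Function.update c.1 j v)
    · by_cases hd : (⟨Function.update c.1 j v, hsa⟩ : {f : Fin k → ℕ // StrictAnti f}) = d
      · obtain ⟨e1, e2, e3⟩ := flipcase hc hsa hd
        simp [hc, hsa, hd, e1, e2, e3]
      · simp only [if_pos hc, dif_pos hsa, if_neg hd]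
        by_cases hd1 : d.1 j = v
        · by_cases hsa2 : StrictAnti (Function.update d.1 j u)
          · by_cases hc2 : (⟨Function.update d.1 j u, hsa2⟩ : {f : Fin k → ℕ // StrictAnti f}) = c
            · exfalso
              obtain ⟨e1, e2, e3⟩ := flipcase hd1 hsa2 hc2
              exact hd e3
            · simp [hd1, hsa2, hc2]
          · simp [hd1, hsa2]
        · simp [hd1]
    · simp only [if_pos hc, dif_neg hsa]
      by_cases hd1 : d.1 j = v
      · by_cases hsa2 : StrictAnti (Function.update d.1 j u)
        · by_cases hc2 : (⟨Function.update d.1 j u, hsa2⟩ : {f : Fin k → ℕ // StrictAnti f}) = c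
          · exfalso
            obtain ⟨e1, e2, e3⟩ := flipcase hd1 hsa2 hc2
            exact hsa e2
          · simp [hd1, hsa2, hc2]
        · simp [hd1, hsa2]
      · simp [hd1]
  · simp only [if_neg hc]
    by_cases hd1 : d.1 j = v
    · by_cases hsa2 : StrictAnti (Function.update d.1 j u)
      · by_cases hc2 : (⟨Function.update d.1 j u, hsa2⟩ : {f : Fin k → ℕ // StrictAnti f}) = c
        · exfalso
          obtain ⟨e1, e2, e3⟩ := flipcase hd1 hsa2 hc2
          exact hc e1
        · simp [hd1, hsa2, hc2]
      · simp [hd1, hsa2]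
    · simp [hd1]

lemma replD_adj {m n : ℕ} (u v : ℕ) (p q : XIdx m n) :
    replD (m := m) (n := n) u v (Finsupp.single p 1) q
      = replD v u (Finsupp.single q 1) p := by
  simp only [replD, Finsupp.lift_apply, Finsupp.sum_single_index, one_smul,
    Finsupp.finset_sum_apply, zero_smul]
  refine Finset.sum_congr rfl fun j _ => ?_
  rw [apply_ite (fun f : Xsp m n => f q), apply_dite (fun f : Xsp m n => f q),
      apply_ite (fun f : Xsp m n => f p), apply_dite (fun f : Xsp m n => f p)]
  simp only [Finsupp.single_apply, Finsupp.coe_zero, Pi.zero_apply]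
  by_cases h1 : p.1 = q.1
  · obtain ⟨p1, p2⟩ := p
    obtain ⟨q1, q2⟩ := q
    cases h1
    simp only [Prod.mk.injEq, true_and]
    exact keylem p2 q2 j
  · split_ifs <;> simp_all [Prod.ext_iff]

lemma replC_adj {m n : ℕ} (u v : ℕ) (p q : XIdx m n) :
    replC (m := m) (n := n) u v (Finsupp.single p 1) q
      = replC v u (Finsupp.single q 1) p := by
  simp only [replC, Finsupp.lift_apply, Finsupp.sum_single_index, one_smul,
    Finsupp.finset_sum_apply, zero_smul]
  refine Finset.sum_congr rfl fun i _ => ?_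
  rw [apply_ite (fun f : Xsp m n => f q), apply_dite (fun f : Xsp m n => f q),
      apply_ite (fun f : Xsp m n => f p), apply_dite (fun f : Xsp m n => f p)]
  simp only [Finsupp.single_apply, Finsupp.coe_zero, Pi.zero_apply]
  by_cases h1 : p.2 = q.2
  · obtain ⟨p1, p2⟩ := p
    obtain ⟨q1, q2⟩ := q
    cases h1
    simp only [Prod.mk.injEq, and_true]
    exact keylem p1 q1 i
  · split_ifs <;> simp_all [Prod.ext_iff]

lemma xPair_single_left {m n : ℕ} (p : XIdx m n) (b : ℚ) (y : Xsp m n) :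
    xPair (Finsupp.single p b) y = b * y p := by
  simp [xPair, Finsupp.sum_single_index]

lemma xPair_single_right {m n : ℕ} (x : Xsp m n) (q : XIdx m n) (c : ℚ) :
    xPair x (Finsupp.single q c) = x q * c := by
  classical
  rw [xPair]
  rw [Finsupp.sum]
  simp only [Finsupp.single_apply]
  rw [Finset.sum_eq_single q]
  · split_ifs with h
    · rfl
    · simp at h
  · intro p _ hpq
    simp [Ne.symm hpq]
  · intro hq
    simp [Finsupp.notMem_support_iff.mp hq]

lemma xPair_add_left {m n : ℕ} (x x' y : Xsp m n) :
    xPair (x + x') y = xPair x y + xPair x' y := by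
  simp [xPair, Finsupp.sum_add_index', add_mul]

lemma xPair_add_right {m n : ℕ} (x y y' : Xsp m n) :
    xPair x (y + y') = xPair x y + xPair x y' := by
  simp [xPair, mul_add, Finsupp.sum_add]

/-- **Adjointness of the translation operators (categorified form of equation (4)).**
With respect to the pairing making the basis `{x_λ}` orthonormal, the operators
`E_{a,a+1}` and `E_{a+1,a}` on `Λ^m(V*) ⊗ Λ^n(V)` are mutually adjoint:
`⟨E_{a,a+1} x, y⟩ = ⟨x, E_{a+1,a} y⟩` for all `x`, `y`. -/
theorem stmt17 {m n : ℕ} (t : ℕ) (x y : Xsp m n) :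
    xPair (Eraise t x) y = xPair x (Elower t y) := by
  induction x using Finsupp.induction_linear with
  | zero => simp [xPair]
  | add f g hf hg => rw [map_add, xPair_add_left, xPair_add_left, hf, hg]
  | single p b =>
    induction y using Finsupp.induction_linear with
    | zero => simp [xPair, Finsupp.sum]
    | add f g hf hg => rw [map_add, xPair_add_right, xPair_add_right, hf, hg]
    | single q c =>
      have hb : (Finsupp.single p b : Xsp m n) = b • Finsupp.single p 1 := by
        rw [Finsupp.smul_single, smul_eq_mul, mul_one]
      have hc : (Finsupp.single q c : Xsp m n) = c • Finsupp.single q 1 := by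
        rw [Finsupp.smul_single, smul_eq_mul, mul_one]
      rw [xPair_single_right, xPair_single_left, hb, hc, map_smul, map_smul,
        Finsupp.smul_apply, Finsupp.smul_apply, smul_eq_mul, smul_eq_mul]
      have key : Eraise (m := m) (n := n) t (Finsupp.single p 1) q
          = Elower t (Finsupp.single q 1) p := by
        simp only [Eraise, Elower, LinearMap.add_apply, Finsupp.add_apply]
        rw [replD_adj, replC_adj]
      rw [key]; ring
end

section
/- Let sw be the switch operator on the span of Euler classes: sw(E(λ)) = Σ_μ E(μ) where μ ranges over {λ} ∪ {λ ± ε_j} ∪ {λ ± δ_k} with γ(μ) = γ(λ). Using the Weyl-group symmetry E(s(λ+ρ)−ρ) = −E(λ) for a simple reflection s: if f_λ has empty tail position then sw(E(λ)) = E(λ); if f_λ has > or < at the tail position then sw(E(λ)) = 0; if f_λ has × at the tail position then sw(E(λ)) = −E(λ). -/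
open Classical Finset

/-- The `gl_{∞/2}`-weight `γ(λ)` (equivalently, the central character) of the weight
with doubled coordinates `λ + ρ = (a₁/2, …, a_m/2 | b₁/2, …, b_n/2)`: a formal sum of
`γ_{|t|/2}`-s over the coordinates, `v`-coordinates counted positively and
`w`-coordinates negatively. -/
noncomputable def gamOdd {m n : ℕ} (a : Fin m → ℤ) (b : Fin n → ℤ) : ℕ →₀ ℤ :=
  (∑ j, Finsupp.single (b j).natAbs (1 : ℤ)) - ∑ i, Finsupp.single (a i).natAbs (1 : ℤ)

open Classical in
/-- The switch operator on Euler characteristics: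
`sw(E(λ)) = Σ_μ E(μ)`, the sum over `μ ∈ {λ} ∪ {λ ± ε_j} ∪ {λ ± δ_k}` with
`γ(μ) = γ(λ)`.  (In doubled coordinates `±ε_j`, `±δ_k` change one coordinate by `±2`.) -/
noncomputable def swE {m n : ℕ} {M : Type*} [AddCommGroup M]
    (E : ((Fin m → ℤ) × (Fin n → ℤ)) → M) (a : Fin m → ℤ) (b : Fin n → ℤ) : M :=
  E (a, b)
    + ∑ i, ∑ s ∈ ({2, -2} : Finset ℤ),
        (if gamOdd (Function.update a i (a i + s)) b = gamOdd a b
          then E (Function.update a i (a i + s), b) else 0)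
    + ∑ j, ∑ s ∈ ({2, -2} : Finset ℤ),
        (if gamOdd a (Function.update b j (b j + s)) = gamOdd a b
          then E (a, Function.update b j (b j + s)) else 0)

/-- **Lemma 5 (action of the switch functor on Euler characteristics).**
Work in an abelian group spanned by symbols `E(λ)` indexed by
`osp(2m+1,2n)`-weights in doubled half-integer coordinates (so `λ + ρ` has odd
coordinates, and `a_i = 1` encodes a symbol at the tail position `1/2`), subject to
the Weyl-group sign relations `E(s(λ+ρ)−ρ) = −E(λ)` for the sign-change reflections.
Let `λ` be tailless dominant.  If the tail position of `f_λ` is empty then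
`sw(E(λ)) = E(λ)`; if `f_λ` has `>` or `<` at the tail position then `sw(E(λ)) = 0`;
and if `f_λ` has `×` at the tail position then `sw(E(λ)) = −E(λ)`. -/
theorem stmt18 {m n : ℕ} {M : Type*} [AddCommGroup M]
    (E : ((Fin m → ℤ) × (Fin n → ℤ)) → M)
    (a : Fin m → ℤ) (b : Fin n → ℤ)
    (ha : StrictAnti a) (hb : StrictAnti b)
    (hapos : ∀ i, 1 ≤ a i) (hbpos : ∀ j, 1 ≤ b j)
    (haodd : ∀ i, Odd (a i)) (hbodd : ∀ j, Odd (b j))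
    (hreflA : ∀ (a' : Fin m → ℤ) (b' : Fin n → ℤ) (i : Fin m),
      E (Function.update a' i (-(a' i)), b') = - E (a', b'))
    (hreflB : ∀ (a' : Fin m → ℤ) (b' : Fin n → ℤ) (j : Fin n),
      E (a', Function.update b' j (-(b' j))) = - E (a', b')) :
    ((∀ i, a i ≠ 1) → (∀ j, b j ≠ 1) → swE E a b = E (a, b)) ∧
    ((∃ i, a i = 1) → (∀ j, b j ≠ 1) → swE E a b = 0) ∧
    ((∀ i, a i ≠ 1) → (∃ j, b j = 1) → swE E a b = 0) ∧
    ((∃ i, a i = 1) → (∃ j, b j = 1) → swE E a b = - E (a, b)) := by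
  -- gamOdd equality characterizations
  have hgamA : ∀ (i : Fin m) (x : ℤ),
      (gamOdd (Function.update a i x) b = gamOdd a b ↔ x.natAbs = (a i).natAbs) := by
    intro i x
    unfold gamOdd
    rw [sub_right_inj]
    have h1 : ∑ k, Finsupp.single ((Function.update a i x) k).natAbs (1:ℤ)
        = Finsupp.single x.natAbs 1 + ∑ k ∈ univ.erase i, Finsupp.single (a k).natAbs 1 := by
      rw [← Finset.add_sum_erase _ _ (mem_univ i)]
      congr 1
      · simp
      · exact Finset.sum_congr rfl fun k hk => by
          rw [Function.update_of_ne (Finset.ne_of_mem_erase hk)]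
    have h2 : ∑ k, Finsupp.single (a k).natAbs (1:ℤ)
        = Finsupp.single (a i).natAbs 1 + ∑ k ∈ univ.erase i, Finsupp.single (a k).natAbs 1 :=
      (Finset.add_sum_erase _ _ (mem_univ i)).symm
    rw [h1, h2, add_left_inj]
    exact Finsupp.single_left_inj one_ne_zero
  have hgamB : ∀ (j : Fin n) (x : ℤ),
      (gamOdd a (Function.update b j x) = gamOdd a b ↔ x.natAbs = (b j).natAbs) := by
    intro j x
    unfold gamOdd
    rw [sub_left_inj]
    have h1 : ∑ k, Finsupp.single ((Function.update b j x) k).natAbs (1:ℤ)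
        = Finsupp.single x.natAbs 1 + ∑ k ∈ univ.erase j, Finsupp.single (b k).natAbs 1 := by
      rw [← Finset.add_sum_erase _ _ (mem_univ j)]
      congr 1
      · simp
      · exact Finset.sum_congr rfl fun k hk => by
          rw [Function.update_of_ne (Finset.ne_of_mem_erase hk)]
    have h2 : ∑ k, Finsupp.single (b k).natAbs (1:ℤ)
        = Finsupp.single (b j).natAbs 1 + ∑ k ∈ univ.erase j, Finsupp.single (b k).natAbs 1 :=
      (Finset.add_sum_erase _ _ (mem_univ j)).symm
    rw [h1, h2, add_left_inj]
    exact Finsupp.single_left_inj one_ne_zero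
  -- inner sums
  have hA : ∀ i : Fin m,
      (∑ s ∈ ({2, -2} : Finset ℤ),
        (if gamOdd (Function.update a i (a i + s)) b = gamOdd a b
          then E (Function.update a i (a i + s), b) else 0)) =
      (if a i = 1 then -E (a, b) else 0) := by
    intro i
    obtain ⟨k, hk⟩ := haodd i
    have hp := hapos i
    rw [Finset.sum_pair (by decide : (2:ℤ) ≠ -2)]
    rw [if_neg (by rw [hgamA]; omega)]
    by_cases hai : a i = 1
    · rw [if_pos (by rw [hgamA]; omega), if_pos hai, zero_add,
        show a i + -2 = -(a i) by omega, hreflA]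
    · rw [if_neg (by rw [hgamA]; omega), if_neg hai, zero_add]
  have hB : ∀ j : Fin n,
      (∑ s ∈ ({2, -2} : Finset ℤ),
        (if gamOdd a (Function.update b j (b j + s)) = gamOdd a b
          then E (a, Function.update b j (b j + s)) else 0)) =
      (if b j = 1 then -E (a, b) else 0) := by
    intro j
    obtain ⟨k, hk⟩ := hbodd j
    have hp := hbpos j
    rw [Finset.sum_pair (by decide : (2:ℤ) ≠ -2)]
    rw [if_neg (by rw [hgamB]; omega)]
    by_cases hbj : b j = 1
    · rw [if_pos (by rw [hgamB]; omega), if_pos hbj, zero_add,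
        show b j + -2 = -(b j) by omega, hreflB]
    · rw [if_neg (by rw [hgamB]; omega), if_neg hbj, zero_add]
  -- collapsing sums over injective functions
  have hsum : ∀ {k : ℕ} (f : Fin k → ℤ), Function.Injective f → ∀ c : M,
      (∑ i, if f i = 1 then c else 0) = if ∃ i, f i = 1 then c else 0 := by
    intro k f hf c
    by_cases h : ∃ i, f i = 1
    · obtain ⟨i0, hi0⟩ := h
      rw [if_pos ⟨i0, hi0⟩, Finset.sum_eq_single i0]
      · rw [if_pos hi0]
      · intro k' _ hne
        exact if_neg fun h1 => hne (hf (h1.trans hi0.symm))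
      · intro h; exact absurd (mem_univ i0) h
    · rw [if_neg h]
      exact Finset.sum_eq_zero fun i _ => if_neg fun hi => h ⟨i, hi⟩
  have key : swE E a b = E (a, b) + (if ∃ i, a i = 1 then -E (a, b) else 0)
      + (if ∃ j, b j = 1 then -E (a, b) else 0) := by
    unfold swE
    rw [Finset.sum_congr rfl (fun i _ => hA i), Finset.sum_congr rfl (fun j _ => hB j),
      hsum a ha.injective, hsum b hb.injective]
  refine ⟨?_, ?_, ?_, ?_⟩
  · intro h1 h2
    rw [key, if_neg (not_exists.mpr h1), if_neg (not_exists.mpr h2), add_zero, add_zero]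
  · intro h1 h2
    rw [key, if_pos h1, if_neg (not_exists.mpr h2), add_zero, add_neg_cancel]
  · intro h1 h2
    rw [key, if_neg (not_exists.mpr h1), if_pos h2, add_zero, add_neg_cancel]
  · intro h1 h2
    rw [key, if_pos h1, if_pos h2]
    abel
end
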